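/- arXiv:1502.03216 — 2 statements merged into one kernel-verified Lean document; each statement's English description precedes it below -/
import Mathlib

section
/- In the calculus L_lcc, normal-order reduction preserves contextual equivalence: if s →_lcc s' then s ∼_lcc s'. Hence the reduction rules (nbeta), (ncase) and (nseq) of L_lcc are correct program transformations, i.e. applying them in any context preserves ∼_lcc. -/
/-! # Core syntax for the calculi L_lcc, L_name and LR

Following Schmidt-Schauß, Sabel, Machkasova,
"Simulation in the Call-by-Need Lambda-Calculus with Letrec, Case, Constructors, and Seq".

Expressions use de Bruijn indices.  A signature fixes the set of types, the data
constructors of each type together with their arities, and a distinguished type `Bool`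
with the 0-ary constructors `True` and `False`. -/



structure Sig : Type 1 where
  TyName : Type
  CName : TyName → Type
  deceq : ∀ T, DecidableEq (CName T)
  arity : ∀ T, CName T → ℕ
  boolTy : TyName
  trueC : CName boolTy
  falseC : CName boolTy
  true_arity : arity boolTy trueC = 0
  false_arity : arity boolTy falseC = 0
  true_ne_false : trueC ≠ falseC

variable (S : Sig)

/-- ℒ-expressions (de Bruijn): variables, applications, abstractions, fully saturated
constructor applications, `seq`, `case` (with exactly one alternative per constructor
of the scrutinized type; the alternative for `c` binds `arity c` variables), and
`letrec` with `n+1` mutually recursive bindings (so at least one binding); the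
bindings and the body are under the `n+1` letrec binders.
The letrec-free expressions are the expressions of `L_lcc`. -/
inductive Exp : Type where
  | var : ℕ → Exp
  | app : Exp → Exp → Exp
  | lam : Exp → Exp
  | constr : (T : S.TyName) → (c : S.CName T) → (Fin (S.arity T c) → Exp) → Exp
  | seqE : Exp → Exp → Exp
  | caseE : (T : S.TyName) → Exp → ((c : S.CName T) → Exp) → Exp
  | letrecE : (n : ℕ) → (Fin (n+1) → Exp) → Exp → Exp

namespace Core

variable {S}

/-- lift a renaming under `m` binders -/
def liftN (m : ℕ) (f : ℕ → ℕ) : ℕ → ℕ := fun k => if k < m then k else f (k - m) + m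

/-- renaming of de Bruijn indices -/
def rename (f : ℕ → ℕ) : Exp S → Exp S
  | .var k => .var (f k)
  | .app u v => .app (rename f u) (rename f v)
  | .lam u => .lam (rename (liftN 1 f) u)
  | .constr T c args => .constr T c (fun i => rename f (args i))
  | .seqE u v => .seqE (rename f u) (rename f v)
  | .caseE T e alts => .caseE T (rename f e) (fun c => rename (liftN (S.arity T c) f) (alts c))
  | .letrecE n b t => .letrecE n (fun i => rename (liftN (n+1) f) (b i)) (rename (liftN (n+1) f) t)

/-- lift a substitution under `m` binders -/
def upN (m : ℕ) (σ : ℕ → Exp S) : ℕ → Exp S :=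
  fun k => if k < m then .var k else rename (· + m) (σ (k - m))

/-- parallel substitution -/
def subst (σ : ℕ → Exp S) : Exp S → Exp S
  | .var k => σ k
  | .app u v => .app (subst σ u) (subst σ v)
  | .lam u => .lam (subst (upN 1 σ) u)
  | .constr T c args => .constr T c (fun i => subst σ (args i))
  | .seqE u v => .seqE (subst σ u) (subst σ v)
  | .caseE T e alts => .caseE T (subst σ e) (fun c => subst (upN (S.arity T c) σ) (alts c))
  | .letrecE n b t => .letrecE n (fun i => subst (upN (n+1) σ) (b i)) (subst (upN (n+1) σ) t)

/-- the substitution `[t/x0]` for the outermost binder -/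
def consSub (t : Exp S) : ℕ → Exp S
  | 0 => t
  | (k+1) => .var k

/-- the substitution replacing the `m` innermost binders by `args` -/
def instSub {m : ℕ} (args : Fin m → Exp S) : ℕ → Exp S :=
  fun k => if h : k < m then args ⟨k, h⟩ else .var (k - m)

/-- `closedUnder d e`: all free de Bruijn indices of `e` are `< d` -/
def closedUnder : ℕ → Exp S → Prop
  | d, .var k => k < d
  | d, .app u v => closedUnder d u ∧ closedUnder d v
  | d, .lam u => closedUnder (d+1) u
  | d, .constr _ _ args => ∀ i, closedUnder d (args i)
  | d, .seqE u v => closedUnder d u ∧ closedUnder d v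
  | d, .caseE T e alts => closedUnder d e ∧ ∀ c, closedUnder (d + S.arity T c) (alts c)
  | d, .letrecE n b t => (∀ i, closedUnder (d + (n+1)) (b i)) ∧ closedUnder (d + (n+1)) t

/-- a closed expression -/
def closed (e : Exp S) : Prop := closedUnder 0 e

/-- letrec-free expressions, i.e. the expressions of the calculus `L_lcc` -/
def lfree : Exp S → Prop
  | .var _ => True
  | .app u v => lfree u ∧ lfree v
  | .lam u => lfree u
  | .constr _ _ args => ∀ i, lfree (args i)
  | .seqE u v => lfree u ∧ lfree v
  | .caseE _ e alts => lfree e ∧ ∀ c, lfree (alts c)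
  | .letrecE _ _ _ => False

/-- values: abstractions and constructor applications -/
def isValue : Exp S → Prop
  | .lam _ => True
  | .constr _ _ _ => True
  | _ => False

/-- constructor applications -/
def isConstrApp (e : Exp S) : Prop := ∃ T c args, e = .constr T c args

/-- the diverging expression `Ω = (λz. z z) (λx. x x)` -/
def Omega : Exp S :=
  .app (.lam (.app (.var 0) (.var 0))) (.lam (.app (.var 0) (.var 0)))

/-- the constructor `True` (of the distinguished type `Bool`, arity 0) -/
def trueE : Exp S := .constr S.boolTy S.trueC (fun _ => .var 0)

/-- update the alternative for constructor `c0` -/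
def updAlt {T : S.TyName} (alts : (c : S.CName T) → Exp S) (c0 : S.CName T) (e : Exp S) :
    (c : S.CName T) → Exp S :=
  fun c => letI := S.deceq T; if c = c0 then e else alts c

end Core
namespace Core

variable {S : Sig}

/-! ## Contexts -/

/-- reduction contexts of `L_lcc` (and `A`-contexts of `L_name`):
`A ::= [·] | (A s) | (case_T A of alts) | (seq A s)` -/
inductive ACtx (S : Sig) : Type where
  | hole : ACtx S
  | appA : ACtx S → Exp S → ACtx S
  | seqA : ACtx S → Exp S → ACtx S
  | caseA : (T : S.TyName) → ACtx S → ((c : S.CName T) → Exp S) → ACtx S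

/-- plugging an expression into an `A`-context -/
def plugA : ACtx S → Exp S → Exp S
  | .hole, e => e
  | .appA A t, e => .app (plugA A e) t
  | .seqA A t, e => .seqE (plugA A e) t
  | .caseA T A alts, e => .caseE T (plugA A e) alts

/-- renaming an `A`-context (there are no binders above the hole) -/
def renameA (f : ℕ → ℕ) : ACtx S → ACtx S
  | .hole => .hole
  | .appA A t => .appA (renameA f A) (rename f t)
  | .seqA A t => .seqA (renameA f A) (rename f t)
  | .caseA T A alts => .caseA T (renameA f A) (fun c => rename (liftN (S.arity T c) f) (alts c))

/-- general (one-hole, possibly capturing) contexts over ℒ-expressions -/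
inductive Ctx (S : Sig) : Type where
  | hole : Ctx S
  | appL : Ctx S → Exp S → Ctx S
  | appR : Exp S → Ctx S → Ctx S
  | lamC : Ctx S → Ctx S
  | seqL : Ctx S → Exp S → Ctx S
  | seqR : Exp S → Ctx S → Ctx S
  | constrC : (T : S.TyName) → (c : S.CName T) → Fin (S.arity T c) →
      (Fin (S.arity T c) → Exp S) → Ctx S → Ctx S
  | caseScrut : (T : S.TyName) → Ctx S → ((c : S.CName T) → Exp S) → Ctx S
  | caseAlt : (T : S.TyName) → (c0 : S.CName T) → Exp S → ((c : S.CName T) → Exp S) →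
      Ctx S → Ctx S
  | letrecB : (n : ℕ) → Fin (n+1) → (Fin (n+1) → Exp S) → Ctx S → Exp S → Ctx S
  | letrecT : (n : ℕ) → (Fin (n+1) → Exp S) → Ctx S → Ctx S

/-- plugging (capture-permitting) into a general context -/
def plugC : Ctx S → Exp S → Exp S
  | .hole, e => e
  | .appL C t, e => .app (plugC C e) t
  | .appR t C, e => .app t (plugC C e)
  | .lamC C, e => .lam (plugC C e)
  | .seqL C t, e => .seqE (plugC C e) t
  | .seqR t C, e => .seqE t (plugC C e)
  | .constrC T c i args C, e => .constr T c (Function.update args i (plugC C e))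
  | .caseScrut T C alts, e => .caseE T (plugC C e) alts
  | .caseAlt T c0 scrut alts C, e => .caseE T scrut (updAlt alts c0 (plugC C e))
  | .letrecB n i b C t, e => .letrecE n (Function.update b i (plugC C e)) t
  | .letrecT n b C, e => .letrecE n b (plugC C e)

/-- number of binders above the hole of a context -/
def depthC : Ctx S → ℕ
  | .hole => 0
  | .appL C _ => depthC C
  | .appR _ C => depthC C
  | .lamC C => depthC C + 1
  | .seqL C _ => depthC C
  | .seqR _ C => depthC C
  | .constrC _ _ _ _ C => depthC C
  | .caseScrut _ C _ => depthC C
  | .caseAlt T c0 _ _ C => depthC C + S.arity T c0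
  | .letrecB n _ _ C _ => depthC C + (n+1)
  | .letrecT n _ C => depthC C + (n+1)

/-- letrec-free contexts, i.e. the contexts of `L_lcc` -/
def lfreeCtx : Ctx S → Prop
  | .hole => True
  | .appL C t => lfreeCtx C ∧ lfree t
  | .appR t C => lfree t ∧ lfreeCtx C
  | .lamC C => lfreeCtx C
  | .seqL C t => lfreeCtx C ∧ lfree t
  | .seqR t C => lfree t ∧ lfreeCtx C
  | .constrC _ _ _ args C => (∀ i, lfree (args i)) ∧ lfreeCtx C
  | .caseScrut _ C alts => lfreeCtx C ∧ ∀ c, lfree (alts c)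
  | .caseAlt _ _ scrut alts C => lfree scrut ∧ (∀ c, lfree (alts c)) ∧ lfreeCtx C
  | .letrecB _ _ _ _ _ => False
  | .letrecT _ _ _ => False

/-! ## The calculus `L_lcc` -/

/-- the basic reduction rules (nbeta), (nseq), (ncase) of `L_lcc` -/
inductive LccBase : Exp S → Exp S → Prop where
  | nbeta {u t} : LccBase (.app (.lam u) t) (subst (consSub t) u)
  | nseq {v t} : isValue v → LccBase (.seqE v t) t
  | ncase {T c args alts} :
      LccBase (.caseE T (.constr T c args) alts) (subst (instSub args) (alts c))

/-- normal-order reduction of `L_lcc`: a basic rule inside a reduction context -/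
def lccStep (s t : Exp S) : Prop :=
  ∃ (A : ACtx S) (r r' : Exp S), LccBase r r' ∧ s = plugA A r ∧ t = plugA A r'

/-- `s` reduces in finitely many normal-order steps to the value `v` -/
def lccConvTo (s v : Exp S) : Prop := Relation.ReflTransGen lccStep s v ∧ isValue v

/-- convergence in `L_lcc` -/
def lccConv (s : Exp S) : Prop := ∃ v, lccConvTo s v

/-- contextual preorder of `L_lcc` (quantifying over the letrec-free contexts) -/
def leLcc (s t : Exp S) : Prop :=
  ∀ C : Ctx S, lfreeCtx C → lccConv (plugC C s) → lccConv (plugC C t)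

/-- contextual equivalence of `L_lcc` -/
def eqLcc (s t : Exp S) : Prop := leLcc s t ∧ leLcc t s

/-- open extension of a relation, w.r.t. closing `L_lcc`-substitutions -/
def openL (η : Exp S → Exp S → Prop) (s t : Exp S) : Prop :=
  ∀ σ : ℕ → Exp S, (∀ k, lfree (σ k)) →
    closed (subst σ s) → closed (subst σ t) → η (subst σ s) (subst σ t)

/-- `cBot`: expressions all of whose closing `L_lcc`-instances diverge -/
def cBot (s : Exp S) : Prop :=
  ∀ σ : ℕ → Exp S, (∀ k, lfree (σ k)) → closed (subst σ s) → ¬ lccConv (subst σ s)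

/-- greatest fixpoint of a (monotone) operator on relations:
the union of all post-fixed points -/
def gfpRel {α : Type*} (F : (α → α → Prop) → (α → α → Prop)) (a b : α) : Prop :=
  ∃ η, (∀ x y, η x y → F η x y) ∧ η a b

/-- the operator `F_lcc` for applicative similarity in `L_lcc` -/
def Flcc (η : Exp S → Exp S → Prop) (s t : Exp S) : Prop :=
  (∀ s', lccConvTo s (.lam s') →
      ((∃ t', lccConvTo t (.lam t') ∧ openL η s' t') ∨
       (∃ T c targs, lccConvTo t (.constr T c targs) ∧ cBot s'))) ∧
  (∀ T c args, lccConvTo s (.constr T c args) →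
      ∃ targs, lccConvTo t (.constr T c targs) ∧ ∀ i, η (args i) (targs i))

/-- applicative similarity `≼_lcc` in `L_lcc` -/
def simLcc : Exp S → Exp S → Prop := gfpRel Flcc

end Core
namespace Core

variable {S : Sig}

/-! ## The test contexts `Q_lcc` and `Q_CE` -/

/-- the context `case_T [·] of … ((c x1 … x_ar) → x_i) …`, all other alternatives `Ω` -/
def caseSelCtx (T : S.TyName) (c : S.CName T) (i : Fin (S.arity T c)) : Exp S → Exp S :=
  fun e => .caseE T e (fun c' => letI := S.deceq T; if c' = c then .var i else Omega)

/-- the context `case_T [·] of … ((c x1 … x_ar) → True) …`, all other alternatives `Ω` -/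
def caseTrueCtx (T : S.TyName) (c : S.CName T) : Exp S → Exp S :=
  fun e => .caseE T e (fun c' => letI := S.deceq T; if c' = c then trueE else Omega)

/-- the set `Q_lcc`: application to a closed `L_lcc`-expression, the selector case
contexts, and the `True` case contexts -/
def Qlcc (S : Sig) : Set (Exp S → Exp S) :=
  {f | (∃ r : Exp S, lfree r ∧ closed r ∧ f = fun e => .app e r) ∨
       (∃ T c i, f = caseSelCtx T c i) ∨
       (∃ T c, f = caseTrueCtx T c)}

/-- the set `CE_lcc` of closed letrec-free expressions generated by
`r ::= Ω | λx.s | (c r1 … r_ar)` -/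
inductive CE : Exp S → Prop where
  | omega : CE Omega
  | abs {u : Exp S} : lfree (Exp.lam u) → closed (Exp.lam u) → CE (.lam u)
  | constrI {T c} {args : Fin (S.arity T c) → Exp S} :
      (∀ i, CE (args i)) → CE (.constr T c args)

/-- the set `Q_CE`: like `Q_lcc`, but the arguments in application contexts are
restricted to `CE_lcc` -/
def QCE (S : Sig) : Set (Exp S → Exp S) :=
  {f | (∃ r : Exp S, CE r ∧ f = fun e => .app e r) ∨
       (∃ T c i, f = caseSelCtx T c i) ∨
       (∃ T c, f = caseTrueCtx T c)}

/-- `Q1 (Q2 (… (Qn s)))` -/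
def applyAll (l : List (Exp S → Exp S)) (s : Exp S) : Exp S := l.foldr (fun f e => f e) s

/-! ### `Q`-similarity and the inductive `Q`-preorder in `L_lcc` -/

/-- the `Q`-experiment operator for `L_lcc`, instantiated with a set `𝒬` of contexts -/
def FQlcc (𝒬 : Set (Exp S → Exp S)) (η : Exp S → Exp S → Prop) (s t : Exp S) : Prop :=
  ∀ v1, lccConvTo s v1 → ∃ v2, lccConvTo t v2 ∧ ∀ f ∈ 𝒬, η (f v1) (f v2)

/-- `𝒬`-similarity in `L_lcc` -/
def simQlcc (𝒬 : Set (Exp S → Exp S)) : Exp S → Exp S → Prop := gfpRel (FQlcc 𝒬)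

/-- the inductively defined preorder `≤_{lcc,𝒬}` -/
def leQlcc (𝒬 : Set (Exp S → Exp S)) (s t : Exp S) : Prop :=
  ∀ l : List (Exp S → Exp S), (∀ f ∈ l, f ∈ 𝒬) →
    lccConv (applyAll l s) → lccConv (applyAll l t)

end Core
namespace Core

variable {S : Sig}

/-! ## The call-by-need calculus `LR` -/

/-- variable-to-variable binding chains in a letrec environment -/
inductive derefChain {n : ℕ} (b : Fin (n+1) → Exp S) : Fin (n+1) → Fin (n+1) → Prop where
  | refl (i) : derefChain b i i
  | step {i j k : Fin (n+1)} : b i = .var (j : ℕ) → derefChain b j k → derefChain b i k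

/-- `Needed b body i`: binding `i` is visited by the labeling algorithm (its value is
needed), starting from the body of the top-level letrec -/
inductive Needed {n : ℕ} (b : Fin (n+1) → Exp S) (body : Exp S) : Fin (n+1) → Prop where
  | ofBody {A : ACtx S} {i : Fin (n+1)} : body = plugA A (.var (i : ℕ)) → Needed b body i
  | ofBind {k} {A : ACtx S} {i : Fin (n+1)} :
      Needed b body k → b k = plugA A (.var (i : ℕ)) → Needed b body i

/-- renaming used when merging letrec environments: the outer part
(`N` outer bindings, `M` inner bindings) -/
def rhoOut (N M : ℕ) : ℕ → ℕ := fun k => if k < N then k else k + M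

/-- renaming used when merging letrec environments: the inner part -/
def rhoIn (N M : ℕ) : ℕ → ℕ :=
  fun k => if k < M then k + N else if k < M + N then k - M else k

/-- merged environment of `(llet-in)`: outer bindings first, then inner bindings -/
def mergeEnv {n m : ℕ} (b : Fin (n+1) → Exp S) (b2 : Fin (m+1) → Exp S) :
    Fin (n+m+1+1) → Exp S :=
  fun j => if h : (j : ℕ) < n+1
    then rename (rhoOut (n+1) (m+1)) (b ⟨j, h⟩)
    else rename (rhoIn (n+1) (m+1)) (b2 ⟨(j : ℕ) - (n+1), by omega⟩)

/-- merged environment of `(llet-e)`: the environment of the letrec bound at `i`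
is flattened into the outer environment, the binding `i` becomes the inner body -/
def mergeEnvAt {n m : ℕ} (b : Fin (n+1) → Exp S) (i : Fin (n+1))
    (b2 : Fin (m+1) → Exp S) (t2 : Exp S) : Fin (n+m+1+1) → Exp S :=
  fun j => if h : (j : ℕ) < n+1
    then (if (⟨j, h⟩ : Fin (n+1)) = i
          then rename (rhoIn (n+1) (m+1)) t2
          else rename (rhoOut (n+1) (m+1)) (b ⟨j, h⟩))
    else rename (rhoIn (n+1) (m+1)) (b2 ⟨(j : ℕ) - (n+1), by omega⟩)

/-- the environment produced by `(case-in)`/`(case-e)` with `arity c = m+1`: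
all old bindings are shifted, binding `j` becomes `c y1 … y_{m+1}` for the fresh
bindings `y_q = s_q` appended at the end -/
def caseShareEnv {n m : ℕ} (b : Fin (n+1) → Exp S) (j : Fin (n+1))
    {T : S.TyName} (c : S.CName T) (h : S.arity T c = m+1)
    (args : Fin (S.arity T c) → Exp S) : Fin (n+m+1+1) → Exp S :=
  fun p => if hp : (p : ℕ) < n+1
    then (if (⟨p, hp⟩ : Fin (n+1)) = j
          then .constr T c (fun q => .var (n+1+(q : ℕ)))
          else rename (rhoOut (n+1) (m+1)) (b ⟨p, hp⟩))
    else rename (rhoOut (n+1) (m+1)) (args (Fin.cast h.symm ⟨(p : ℕ) - (n+1), by omega⟩))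

/-- the replacement for a `(case-in)`/`(case-e)` redex: `letrec z1 = y1, …, z_{m+1} = y_{m+1}
in alt`, where the `y_q` are the fresh environment bindings (indices `n+1+q` at top level) -/
def caseShareBody {n m : ℕ} {T : S.TyName} (c : S.CName T) (_h : S.arity T c = m+1)
    (alts : (c : S.CName T) → Exp S) : Exp S :=
  .letrecE m (fun q => .var (n+1+(m+1)+(q : ℕ)))
    (rename (liftN (m+1) (rhoOut (n+1) (m+1))) (alts c))

/-- the basic `LR`-rules not involving the top-level environment:
(lbeta), (seq-c), (case-c), (lapp), (lseq), (lcase) -/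
inductive LRbase : Exp S → Exp S → Prop where
  | lbeta {u t} :
      LRbase (.app (.lam u) t) (.letrecE 0 (fun _ => rename (· + 1) t) u)
  | seqc {v t} : isValue v → LRbase (.seqE v t) t
  | casec0 {T c args alts} (h : S.arity T c = 0) :
      LRbase (.caseE T (.constr T c args) alts) (alts c)
  | casec1 {T c args alts m} (h : S.arity T c = m+1) :
      LRbase (.caseE T (.constr T c args) alts)
        (.letrecE m (fun i => rename (· + (m+1)) (args (Fin.cast h.symm i))) (alts c))
  | lapp {n b e t} :
      LRbase (.app (.letrecE n b e) t) (.letrecE n b (.app e (rename (· + (n+1)) t)))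
  | lseq {n b e t} :
      LRbase (.seqE (.letrecE n b e) t) (.letrecE n b (.seqE e (rename (· + (n+1)) t)))
  | lcase {n b e T alts} :
      LRbase (.caseE T (.letrecE n b e) alts)
        (.letrecE n b (.caseE T e (fun c => rename (liftN (S.arity T c) (· + (n+1))) (alts c))))

/-- normal-order reduction `→_LR` of the call-by-need calculus `LR`:
the rules of Fig. 1, applied at the position determined by the labeling algorithm
(in the body or in a needed binding of the top-level letrec, or — for expressions
without a top-level letrec — along the application/seq/case spine). -/
inductive LRstep : Exp S → Exp S → Prop where
  /- basic rule at the top (no top-level letrec environment involved): -/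
  | topA {A : ACtx S} {r r'} : LRbase r r' → LRstep (plugA A r) (plugA A r')
  /- basic rule in the body of the top-level letrec: -/
  | bodyA {n} {b : Fin (n+1) → Exp S} {A : ACtx S} {r r'} :
      LRbase r r' → LRstep (.letrecE n b (plugA A r)) (.letrecE n b (plugA A r'))
  /- basic rule inside a needed binding: -/
  | bindA {n} {b : Fin (n+1) → Exp S} {body} {i : Fin (n+1)} {A : ACtx S} {r r'} :
      Needed b body i → b i = plugA A r → LRbase r r' →
      LRstep (.letrecE n b body) (.letrecE n (Function.update b i (plugA A r')) body)
  /- (llet-in): -/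
  | lletIn {n b m b2 t2} :
      LRstep (.letrecE n b (.letrecE m b2 t2))
        (.letrecE (n+m+1) (mergeEnv b b2) (rename (rhoIn (n+1) (m+1)) t2))
  /- (llet-e): -/
  | lletE {n b body} {i : Fin (n+1)} {m b2 t2} :
      Needed b body i → b i = .letrecE m b2 t2 →
      LRstep (.letrecE n b body)
        (.letrecE (n+m+1) (mergeEnvAt b i b2 t2) (rename (rhoOut (n+1) (m+1)) body))
  /- (cp-in): -/
  | cpIn {n} {b : Fin (n+1) → Exp S} {A : ACtx S} {i j : Fin (n+1)} {u} :
      derefChain b i j → b j = .lam u →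
      LRstep (.letrecE n b (plugA A (.var (i : ℕ)))) (.letrecE n b (plugA A (.lam u)))
  /- (cp-e): -/
  | cpE {n} {b : Fin (n+1) → Exp S} {body} {k : Fin (n+1)} {A : ACtx S} {i j : Fin (n+1)} {u} :
      Needed b body k → b k = plugA A (.var (i : ℕ)) → derefChain b i j → b j = .lam u →
      LRstep (.letrecE n b body) (.letrecE n (Function.update b k (plugA A (.lam u))) body)
  /- (seq-in): -/
  | seqIn {n} {b : Fin (n+1) → Exp S} {A : ACtx S} {i j : Fin (n+1)} {t} :
      derefChain b i j → isConstrApp (b j) →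
      LRstep (.letrecE n b (plugA A (.seqE (.var (i : ℕ)) t)))
        (.letrecE n b (plugA A t))
  /- (seq-e): -/
  | seqEe {n} {b : Fin (n+1) → Exp S} {body} {k : Fin (n+1)} {A : ACtx S} {i j : Fin (n+1)} {t} :
      Needed b body k → b k = plugA A (.seqE (.var (i : ℕ)) t) →
      derefChain b i j → isConstrApp (b j) →
      LRstep (.letrecE n b body) (.letrecE n (Function.update b k (plugA A t)) body)
  /- (case-in), scrutinized constructor of arity 0: -/
  | caseIn0 {n} {b : Fin (n+1) → Exp S} {A : ACtx S} {i j : Fin (n+1)} {T c args alts} :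
      derefChain b i j → b j = .constr T c args → S.arity T c = 0 →
      LRstep (.letrecE n b (plugA A (.caseE T (.var (i : ℕ)) alts)))
        (.letrecE n b (plugA A (alts c)))
  /- (case-e), scrutinized constructor of arity 0: -/
  | caseE0 {n} {b : Fin (n+1) → Exp S} {body} {k : Fin (n+1)} {A : ACtx S} {i j : Fin (n+1)}
      {T c args alts} :
      Needed b body k → b k = plugA A (.caseE T (.var (i : ℕ)) alts) →
      derefChain b i j → b j = .constr T c args → S.arity T c = 0 →
      LRstep (.letrecE n b body) (.letrecE n (Function.update b k (plugA A (alts c))) body)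
  /- (case-in), arity ≥ 1: the constructor arguments are shared in fresh bindings -/
  | caseIn1 {n} {b : Fin (n+1) → Exp S} {A : ACtx S} {i j : Fin (n+1)} {T c args alts m}
      (h : S.arity T c = m+1) :
      derefChain b i j → b j = .constr T c args →
      LRstep (.letrecE n b (plugA A (.caseE T (.var (i : ℕ)) alts)))
        (.letrecE (n+m+1) (caseShareEnv b j c h args)
          (plugA (renameA (rhoOut (n+1) (m+1)) A) (caseShareBody (n := n) c h alts)))
  /- (case-e), arity ≥ 1: -/
  | caseE1 {n} {b : Fin (n+1) → Exp S} {body} {k : Fin (n+1)} {A : ACtx S} {i j : Fin (n+1)}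
      {T c args alts m} (h : S.arity T c = m+1) :
      Needed b body k → b k = plugA A (.caseE T (.var (i : ℕ)) alts) →
      derefChain b i j → b j = .constr T c args →
      LRstep (.letrecE n b body)
        (.letrecE (n+m+1)
          (Function.update (caseShareEnv b j c h args)
            (Fin.castLE (by omega) k)
            (plugA (renameA (rhoOut (n+1) (m+1)) A) (caseShareBody (n := n) c h alts)))
          (rename (rhoOut (n+1) (m+1)) body))

/-- weak head normal forms of `LR`: values, `letrec Env in v` for a value `v`, and
`letrec x1 = (c s⃗), x2 = x1, …, xm = x_{m-1}, Env in xm` -/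
def isLRwhnf (s : Exp S) : Prop :=
  isValue s ∨
  ∃ (n : ℕ) (b : Fin (n+1) → Exp S) (body : Exp S), s = .letrecE n b body ∧
    (isValue body ∨ ∃ i j : Fin (n+1), body = .var (i : ℕ) ∧ derefChain b i j ∧ isConstrApp (b j))

/-- `s` reduces in finitely many `→_LR`-steps to an `LR`-WHNF `v` -/
def lrConvTo (s v : Exp S) : Prop := Relation.ReflTransGen LRstep s v ∧ isLRwhnf v

/-- convergence in `LR` -/
def lrConv (s : Exp S) : Prop := ∃ v, lrConvTo s v

/-- contextual preorder of `LR` -/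
def leLR (s t : Exp S) : Prop := ∀ C : Ctx S, lrConv (plugC C s) → lrConv (plugC C t)

/-- contextual equivalence of `LR` -/
def eqLR (s t : Exp S) : Prop := leLR s t ∧ leLR t s

end Core
namespace Core

variable {S : Sig}

/-! ## The call-by-name calculus `L_name` -/

/-- a letrec frame (one `letrec` environment) -/
def Frame (S : Sig) : Type := Σ n : ℕ, Fin (n+1) → Exp S

/-- plugging under a stack of letrec frames (`L`-contexts), outermost frame first -/
def plugFrames : List (Frame S) → Exp S → Exp S
  | [], e => e
  | ⟨n, b⟩ :: fs, e => .letrecE n b (plugFrames fs e)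

/-- looking up a de Bruijn index in a stack of letrec frames given innermost-first;
the result is weakened to the innermost level -/
def lookRev : List (Frame S) → ℕ → Option (Exp S)
  | [], _ => none
  | ⟨n, b⟩ :: rest, k =>
      if h : k < n+1 then some (b ⟨k, h⟩)
      else (lookRev rest (k - (n+1))).map (rename (· + (n+1)))

/-- the basic rules of `L_name`: (beta), (seq), (case) — with substitution —
and (lapp), (lseq), (lcase) -/
inductive NBase : Exp S → Exp S → Prop where
  | beta {u t} : NBase (.app (.lam u) t) (subst (consSub t) u)
  | seqv {v t} : isValue v → NBase (.seqE v t) t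
  | casec {T c args alts} :
      NBase (.caseE T (.constr T c args) alts) (subst (instSub args) (alts c))
  | lapp {n b e t} :
      NBase (.app (.letrecE n b e) t) (.letrecE n b (.app e (rename (· + (n+1)) t)))
  | lseq {n b e t} :
      NBase (.seqE (.letrecE n b e) t) (.letrecE n b (.seqE e (rename (· + (n+1)) t)))
  | lcase {n b e T alts} :
      NBase (.caseE T (.letrecE n b e) alts)
        (.letrecE n b (.caseE T e (fun c => rename (liftN (S.arity T c) (· + (n+1))) (alts c))))

/-- normal-order reduction `→_name` of `L_name`: a basic rule, or the copy rule (gcp),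
inside a reduction context `L[A]` -/
inductive NStep : Exp S → Exp S → Prop where
  | base {fs : List (Frame S)} {A : ACtx S} {r r'} :
      NBase r r' → NStep (plugFrames fs (plugA A r)) (plugFrames fs (plugA A r'))
  | gcp {fs : List (Frame S)} {A : ACtx S} {k : ℕ} {e : Exp S} :
      lookRev fs.reverse k = some e →
      NStep (plugFrames fs (plugA A (.var k))) (plugFrames fs (plugA A e))

/-- weak head normal forms of `L_name`: `L[v]` for a value `v` -/
def isNameWhnf (s : Exp S) : Prop :=
  ∃ (fs : List (Frame S)) (v : Exp S), s = plugFrames fs v ∧ isValue v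

/-- `s` reduces in finitely many `→_name`-steps to an `L_name`-WHNF `v` -/
def nameConvTo (s v : Exp S) : Prop := Relation.ReflTransGen NStep s v ∧ isNameWhnf v

/-- convergence in `L_name` -/
def nameConv (s : Exp S) : Prop := ∃ v, nameConvTo s v

/-- contextual preorder of `L_name` -/
def leName (s t : Exp S) : Prop := ∀ C : Ctx S, nameConv (plugC C s) → nameConv (plugC C t)

/-- contextual equivalence of `L_name` -/
def eqName (s t : Exp S) : Prop := leName s t ∧ leName t s

/-! ## The translation `N : L_name → L_lcc` via multi-fixpoint combinators -/

/-- iterated application `f a1 … an` -/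
def apps (f : Exp S) (l : List (Exp S)) : Exp S := l.foldl .app f

/-- iterated abstraction `λ^k. e` -/
def lamN : ℕ → Exp S → Exp S
  | 0, e => e
  | (k+1), e => .lam (lamN k e)

/-- shift all indices `≥ c` by `k` -/
def shiftCut (c k : ℕ) : Exp S → Exp S := rename (fun x => if x < c then x else x + k)

/-- the argument list `[g (N-1), …, g 0]`, so that after `N` beta steps the
binder with de Bruijn index `i` receives `g i` -/
def argsOf {N : ℕ} (g : Fin N → Exp S) : List (Exp S) := (List.ofFn g).reverse

/-- `U_i = (x_i' x_1' … x_n')` (under the outer binders) -/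
def Uarg (N : ℕ) (i : Fin N) : Exp S :=
  apps (.var (i : ℕ)) (argsOf (fun j : Fin N => .var (j : ℕ)))

/-- `X_i' = λ x1 … xn. F_i (x1 x1 … xn) … (xn x1 … xn)` with `F_i = λ x1 … xn. gi` -/
def Xarg (N : ℕ) (gi : Exp S) : Exp S :=
  lamN N (apps (lamN N (shiftCut N N gi))
    (argsOf (fun j : Fin N => apps (.var (j : ℕ)) (argsOf (fun l : Fin N => .var (l : ℕ))))))

/-- the translation of one letrec: `(λ x1' … xn'. (λ x1 … xn. t') U1 … Un) X1' … Xn'` -/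
def letrecTrans (N : ℕ) (g : Fin N → Exp S) (t' : Exp S) : Exp S :=
  apps (lamN N (apps (lamN N (shiftCut N N t')) (argsOf (Uarg N))))
    (argsOf (fun i => Xarg N (g i)))

/-- the translation `N : L_name → L_lcc`, eliminating letrec by multi-fixpoint
combinators; it is homomorphic on all other constructs.
(The translation `W : LR → L_name` is the identity.) -/
def Ntr : Exp S → Exp S
  | .var k => .var k
  | .app u v => .app (Ntr u) (Ntr v)
  | .lam u => .lam (Ntr u)
  | .constr T c args => .constr T c (fun i => Ntr (args i))
  | .seqE u v => .seqE (Ntr u) (Ntr v)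
  | .caseE T e alts => .caseE T (Ntr e) (fun c => Ntr (alts c))
  | .letrecE n b t => letrecTrans (n+1) (fun i => Ntr (b i)) (Ntr t)

end Core
namespace Core

variable {S : Sig}

/-! ## `Q`-similarity in `LR` -/

/-- open extension of a relation w.r.t. closing ℒ-substitutions -/
def openAll (η : Exp S → Exp S → Prop) (s t : Exp S) : Prop :=
  ∀ σ : ℕ → Exp S, closed (subst σ s) → closed (subst σ t) → η (subst σ s) (subst σ t)

/-- the `Q`-experiment operator for `LR`, instantiated with a set `𝒬` of contexts -/
def FQLR (𝒬 : Set (Exp S → Exp S)) (η : Exp S → Exp S → Prop) (s t : Exp S) : Prop :=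
  ∀ v1, lrConvTo s v1 → ∃ v2, lrConvTo t v2 ∧ ∀ f ∈ 𝒬, η (f v1) (f v2)

/-- `𝒬`-similarity in `LR` -/
def simQLR (𝒬 : Set (Exp S → Exp S)) : Exp S → Exp S → Prop := gfpRel (FQLR 𝒬)

/-- the inductively defined preorder `≤_{LR,𝒬}` -/
def leQLR (𝒬 : Set (Exp S → Exp S)) (s t : Exp S) : Prop :=
  ∀ l : List (Exp S → Exp S), (∀ f ∈ l, f ∈ 𝒬) →
    lrConv (applyAll l s) → lrConv (applyAll l t)

end Core

namespace Core

variable {S : Sig}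

/-! ### Substitution calculus -/

theorem liftN_comp (m : ℕ) (f g : ℕ → ℕ) :
    (fun k => liftN m f (liftN m g k)) = liftN m (fun k => f (g k)) := by
  funext k
  by_cases h : k < m
  · simp [liftN, h]
  · have h2 : ¬ (g (k - m) + m < m) := by omega
    simp [liftN, h, h2]

theorem rename_rename (f g : ℕ → ℕ) (e : Exp S) :
    rename f (rename g e) = rename (fun k => f (g k)) e := by
  induction e generalizing f g with
  | var k => rfl
  | app u v ihu ihv => simp only [rename]; rw [ihu, ihv]
  | lam u ih => simp only [rename]; rw [ih, liftN_comp]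
  | constr T c args ih =>
      simp only [rename]; congr 1; funext i; rw [ih]
  | seqE u v ihu ihv => simp only [rename]; rw [ihu, ihv]
  | caseE T e alts ihe ihalts =>
      simp only [rename]; rw [ihe]; congr 1; funext c; rw [ihalts, liftN_comp]
  | letrecE n b t ihb iht =>
      simp only [rename]; rw [iht, liftN_comp]; congr 1; funext i; rw [ihb, liftN_comp]

theorem upN_liftN (m : ℕ) (σ : ℕ → Exp S) (f : ℕ → ℕ) :
    (fun k => upN m σ (liftN m f k)) = upN m (fun k => σ (f k)) := by
  funext k
  by_cases h : k < m
  · simp [upN, liftN, h]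
  · have h2 : ¬ (f (k - m) + m < m) := by omega
    simp [upN, liftN, h, h2]

theorem subst_rename (σ : ℕ → Exp S) (f : ℕ → ℕ) (e : Exp S) :
    subst σ (rename f e) = subst (fun k => σ (f k)) e := by
  induction e generalizing σ f with
  | var k => rfl
  | app u v ihu ihv => simp only [rename, subst]; rw [ihu, ihv]
  | lam u ih => simp only [rename, subst]; rw [ih, upN_liftN]
  | constr T c args ih =>
      simp only [rename, subst]; congr 1; funext i; rw [ih]
  | seqE u v ihu ihv => simp only [rename, subst]; rw [ihu, ihv]
  | caseE T e alts ihe ihalts =>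
      simp only [rename, subst]; rw [ihe]; congr 1; funext c; rw [ihalts, upN_liftN]
  | letrecE n b t ihb iht =>
      simp only [rename, subst]; rw [iht, upN_liftN]; congr 1; funext i; rw [ihb, upN_liftN]

theorem liftN_upN (m : ℕ) (f : ℕ → ℕ) (σ : ℕ → Exp S) :
    (fun k => rename (liftN m f) (upN m σ k)) = upN m (fun k => rename f (σ k)) := by
  funext k
  by_cases h : k < m
  · simp [upN, rename, liftN, h]
  · simp only [upN, h, if_neg, ite_false]
    rw [rename_rename, rename_rename]
    congr 1
    funext j
    have h2 : ¬ (j + m < m) := by omega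
    simp [liftN, h2]

theorem rename_subst (f : ℕ → ℕ) (σ : ℕ → Exp S) (e : Exp S) :
    rename f (subst σ e) = subst (fun k => rename f (σ k)) e := by
  induction e generalizing σ f with
  | var k => rfl
  | app u v ihu ihv => simp only [rename, subst]; rw [ihu, ihv]
  | lam u ih => simp only [rename, subst]; rw [ih, liftN_upN]
  | constr T c args ih =>
      simp only [rename, subst]; congr 1; funext i; rw [ih]
  | seqE u v ihu ihv => simp only [rename, subst]; rw [ihu, ihv]
  | caseE T e alts ihe ihalts =>
      simp only [rename, subst]; rw [ihe]; congr 1; funext c; rw [ihalts, liftN_upN]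
  | letrecE n b t ihb iht =>
      simp only [rename, subst]; rw [iht, liftN_upN]; congr 1; funext i; rw [ihb, liftN_upN]

theorem upN_upN (m : ℕ) (σ τ : ℕ → Exp S) :
    (fun k => subst (upN m σ) (upN m τ k)) = upN m (fun k => subst σ (τ k)) := by
  funext k
  by_cases h : k < m
  · simp [upN, subst, h]
  · simp only [upN, h, ite_false]
    rw [subst_rename, rename_subst]
    congr 1
    funext j
    have h2 : ¬ (j + m < m) := by omega
    simp [upN, h2]

theorem subst_subst (σ τ : ℕ → Exp S) (e : Exp S) :
    subst σ (subst τ e) = subst (fun k => subst σ (τ k)) e := by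
  induction e generalizing σ τ with
  | var k => rfl
  | app u v ihu ihv => simp only [subst]; rw [ihu, ihv]
  | lam u ih => simp only [subst]; rw [ih, upN_upN]
  | constr T c args ih =>
      simp only [subst]; congr 1; funext i; rw [ih]
  | seqE u v ihu ihv => simp only [subst]; rw [ihu, ihv]
  | caseE T e alts ihe ihalts =>
      simp only [subst]; rw [ihe]; congr 1; funext c; rw [ihalts, upN_upN]
  | letrecE n b t ihb iht =>
      simp only [subst]; rw [iht, upN_upN]; congr 1; funext i; rw [ihb, upN_upN]

theorem upN_var (m : ℕ) : upN m (fun k => (.var k : Exp S)) = fun k => (.var k : Exp S) := by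
  funext k
  by_cases h : k < m
  · simp [upN, h]
  · simp [upN, h, rename]
    omega

theorem subst_var (e : Exp S) : subst (fun k => (.var k : Exp S)) e = e := by
  induction e with
  | var k => rfl
  | app u v ihu ihv => simp only [subst]; rw [ihu, ihv]
  | lam u ih => simp only [subst]; rw [upN_var, ih]
  | constr T c args ih =>
      simp only [subst]; congr 1; funext i; rw [ih]
  | seqE u v ihu ihv => simp only [subst]; rw [ihu, ihv]
  | caseE T e alts ihe ihalts =>
      simp only [subst]; rw [ihe]; congr 1; funext c; rw [upN_var, ihalts]
  | letrecE n b t ihb iht =>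
      simp only [subst]; rw [upN_var, iht]; congr 1; funext i; rw [ihb]

end Core

namespace Core

variable {S : Sig}

/-! ### Commutation of substitution with the redex substitutions -/

theorem subst_consSub (σ : ℕ → Exp S) (a u : Exp S) :
    subst σ (subst (consSub a) u)
      = subst (consSub (subst σ a)) (subst (upN 1 σ) u) := by
  rw [subst_subst, subst_subst]
  congr 1
  funext k
  cases k with
  | zero => simp [consSub, upN, subst]
  | succ k =>
      simp only [consSub, subst, upN, Nat.lt_irrefl]
      have h : ¬ (k + 1 < 1) := by omega
      rw [if_neg h]
      rw [subst_rename]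
      have : (fun j => consSub (subst σ a) (j + 1)) = fun j => (.var j : Exp S) := by
        funext j; rfl
      rw [show k + 1 - 1 = k from rfl, this, subst_var]

theorem subst_instSub (σ : ℕ → Exp S) {m : ℕ} (args : Fin m → Exp S) (u : Exp S) :
    subst σ (subst (instSub args) u)
      = subst (instSub (fun i => subst σ (args i))) (subst (upN m σ) u) := by
  rw [subst_subst, subst_subst]
  congr 1
  funext k
  by_cases h : k < m
  · simp [instSub, upN, subst, h]
  · simp only [instSub, upN, h, dif_neg, ite_false]
    rw [subst_rename]
    have : (fun j => instSub (fun i => subst σ (args i)) (j + m)) = fun j => (.var j : Exp S) := by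
      funext j
      have h2 : ¬ (j + m < m) := by omega
      simp [instSub, h2]
    rw [this, subst_var]
    simp [subst]

theorem rename_consSub (f : ℕ → ℕ) (a u : Exp S) :
    rename f (subst (consSub a) u)
      = subst (consSub (rename f a)) (rename (liftN 1 f) u) := by
  rw [rename_subst, subst_rename]
  congr 1
  funext k
  cases k with
  | zero => simp [consSub, liftN]
  | succ k =>
      have h : ¬ (k + 1 < 1) := by omega
      simp [consSub, liftN, h, rename]

theorem rename_instSub (f : ℕ → ℕ) {m : ℕ} (args : Fin m → Exp S) (u : Exp S) :
    rename f (subst (instSub args) u)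
      = subst (instSub (fun i => rename f (args i))) (rename (liftN m f) u) := by
  rw [rename_subst, subst_rename]
  congr 1
  funext k
  by_cases h : k < m
  · simp [instSub, liftN, h]
  · have h2 : ¬ (f (k - m) + m < m) := by omega
    simp [instSub, liftN, h, h2, rename]

theorem isValue_rename {v : Exp S} (f : ℕ → ℕ) (h : isValue v) :
    isValue (rename f v) := by
  cases v <;> simp_all [isValue, rename]

theorem isValue_subst {v : Exp S} (σ : ℕ → Exp S) (h : isValue v) :
    isValue (subst σ v) := by
  cases v <;> simp_all [isValue, subst]

/-! ### Parallel reduction -/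

/-- parallel reduction -/
inductive Par : Exp S → Exp S → Prop where
  | var (k) : Par (.var k) (.var k)
  | app {u u' v v'} : Par u u' → Par v v' → Par (.app u v) (.app u' v')
  | lam {u u'} : Par u u' → Par (.lam u) (.lam u')
  | constr {T c args args'} : (∀ i, Par (args i) (args' i)) →
      Par (.constr T c args) (.constr T c args')
  | seqC {u u' v v'} : Par u u' → Par v v' → Par (.seqE u v) (.seqE u' v')
  | caseC {T e e' alts alts'} : Par e e' → (∀ c, Par (alts c) (alts' c)) →
      Par (.caseE T e alts) (.caseE T e' alts')
  | letrec {n b b' t t'} : (∀ i : Fin (n+1), Par (b i) (b' i)) → Par t t' →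
      Par (.letrecE n b t) (.letrecE n b' t')
  | beta {u u' a a'} : Par u u' → Par a a' →
      Par (.app (.lam u) a) (subst (consSub a') u')
  | seqR {v q q'} : isValue v → Par q q' → Par (.seqE v q) q'
  | caseR {T c args args' alts r'} : (∀ i, Par (args i) (args' i)) → Par (alts c) r' →
      Par (.caseE T (.constr T c args) alts) (subst (instSub args') r')

theorem parRefl (e : Exp S) : Par e e := by
  induction e with
  | var k => exact .var k
  | app u v ihu ihv => exact .app ihu ihv
  | lam u ih => exact .lam ih
  | constr T c args ih => exact .constr ih
  | seqE u v ihu ihv => exact .seqC ihu ihv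
  | caseE T e alts ihe ihalts => exact .caseC ihe ihalts
  | letrecE n b t ihb iht => exact .letrec ihb iht

theorem parValue {u u' : Exp S} (h : Par u u') (hv : isValue u) : isValue u' := by
  cases h <;> simp_all [isValue]

theorem parRename {u u' : Exp S} (h : Par u u') : ∀ f, Par (rename f u) (rename f u') := by
  induction h with
  | var k => exact fun f => .var _
  | app _ _ ihu ihv => exact fun f => .app (ihu f) (ihv f)
  | lam _ ih => exact fun f => .lam (ih _)
  | constr _ ih => exact fun f => .constr (fun i => ih i _)
  | seqC _ _ ihu ihv => exact fun f => .seqC (ihu f) (ihv f)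
  | caseC _ _ ihe ihalts => exact fun f => .caseC (ihe f) (fun c => ihalts c _)
  | letrec _ _ ihb iht => exact fun f => .letrec (fun i => ihb i _) (iht _)
  | @beta u u' a a' _ _ ihu iha =>
      intro f
      rw [rename_consSub]
      exact .beta (ihu _) (iha f)
  | seqR hv _ ihq =>
      intro f
      exact .seqR (isValue_rename f hv) (ihq f)
  | caseR _ _ ihargs ihr =>
      intro f
      rw [rename_instSub]
      exact .caseR (fun i => ihargs i f) (ihr _)

end Core

namespace Core

variable {S : Sig}

theorem parUpN {σ σ' : ℕ → Exp S} (H : ∀ k, Par (σ k) (σ' k)) (m : ℕ) :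
    ∀ k, Par (upN m σ k) (upN m σ' k) := by
  intro k
  by_cases h : k < m
  · simp only [upN, h, if_pos]; exact .var k
  · simp only [upN, h, if_neg, ite_false]; exact parRename (H _) _

theorem parConsSub {a a' : Exp S} (h : Par a a') :
    ∀ k, Par (consSub a k) (consSub a' k) := by
  intro k; cases k with
  | zero => exact h
  | succ k => exact .var k

theorem parInstSub {m : ℕ} {args args' : Fin m → Exp S}
    (h : ∀ i, Par (args i) (args' i)) :
    ∀ k, Par (instSub args k) (instSub args' k) := by
  intro k
  by_cases hk : k < m
  · simp only [instSub, hk, dif_pos]; exact h _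
  · simp only [instSub, hk, dif_neg]; exact .var _

theorem parSubst {u u' : Exp S} (h : Par u u') :
    ∀ {σ σ' : ℕ → Exp S}, (∀ k, Par (σ k) (σ' k)) →
      Par (subst σ u) (subst σ' u') := by
  induction h with
  | var k => intro σ σ' H; exact H k
  | app _ _ ihu ihv => intro σ σ' H; exact .app (ihu H) (ihv H)
  | lam _ ih => intro σ σ' H; exact .lam (ih (parUpN H 1))
  | constr _ ih => intro σ σ' H; exact .constr (fun i => ih i H)
  | seqC _ _ ihu ihv => intro σ σ' H; exact .seqC (ihu H) (ihv H)
  | caseC _ _ ihe ihalts =>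
      intro σ σ' H; exact .caseC (ihe H) (fun c => ihalts c (parUpN H _))
  | letrec _ _ ihb iht =>
      intro σ σ' H; exact .letrec (fun i => ihb i (parUpN H _)) (iht (parUpN H _))
  | @beta u u' a a' _ _ ihu iha =>
      intro σ σ' H
      rw [subst_consSub]
      exact .beta (ihu (parUpN H 1)) (iha H)
  | seqR hv _ ihq =>
      intro σ σ' H
      exact .seqR (isValue_subst _ hv) (ihq H)
  | caseR _ _ ihargs ihr =>
      intro σ σ' H
      rw [subst_instSub]
      exact .caseR (fun i => ihargs i H) (ihr (parUpN H _))

/-- internal parallel reduction: no redex on the normal-order spine is contracted -/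
inductive IPar : Exp S → Exp S → Prop where
  | var (k) : IPar (.var k) (.var k)
  | app {u u' v v'} : IPar u u' → Par v v' → IPar (.app u v) (.app u' v')
  | lam {u u'} : Par u u' → IPar (.lam u) (.lam u')
  | constr {T c args args'} : (∀ i, Par (args i) (args' i)) →
      IPar (.constr T c args) (.constr T c args')
  | seqC {u u' v v'} : IPar u u' → Par v v' → IPar (.seqE u v) (.seqE u' v')
  | caseC {T e e' alts alts'} : IPar e e' → (∀ c, Par (alts c) (alts' c)) →
      IPar (.caseE T e alts) (.caseE T e' alts')
  | letrec {n b b' t t'} : (∀ i : Fin (n+1), Par (b i) (b' i)) → Par t t' →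
      IPar (.letrecE n b t) (.letrecE n b' t')

theorem iparPar {u u' : Exp S} (h : IPar u u') : Par u u' := by
  induction h with
  | var k => exact .var k
  | app _ hv ih => exact .app ih hv
  | lam h => exact .lam h
  | constr h => exact .constr h
  | seqC _ hv ih => exact .seqC ih hv
  | caseC _ halts ih => exact .caseC ih halts
  | letrec hb ht => exact .letrec hb ht

theorem iparRefl (e : Exp S) : IPar e e := by
  cases e with
  | var k => exact .var k
  | app u v => exact .app (by exact_mod_cast iparRefl u) (parRefl v)
  | lam u => exact .lam (parRefl u)
  | constr T c args => exact .constr (fun i => parRefl _)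
  | seqE u v => exact .seqC (iparRefl u) (parRefl v)
  | caseE T e alts => exact .caseC (iparRefl e) (fun c => parRefl _)
  | letrecE n b t => exact .letrec (fun i => parRefl _) (parRefl t)

theorem iparValue {u u' : Exp S} (h : IPar u u') (hv : isValue u') : isValue u := by
  cases h <;> simp_all [isValue]

/-! ### Normal-order steps: basic lemmas -/

theorem stepApp {u u₁ : Exp S} (h : lccStep u u₁) (v : Exp S) :
    lccStep (.app u v) (.app u₁ v) := by
  obtain ⟨A, r, r', hb, rfl, rfl⟩ := h
  exact ⟨.appA A v, r, r', hb, rfl, rfl⟩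

theorem stepSeq {u u₁ : Exp S} (h : lccStep u u₁) (v : Exp S) :
    lccStep (.seqE u v) (.seqE u₁ v) := by
  obtain ⟨A, r, r', hb, rfl, rfl⟩ := h
  exact ⟨.seqA A v, r, r', hb, rfl, rfl⟩

theorem stepCase {e e₁ : Exp S} (h : lccStep e e₁) (T : S.TyName)
    (alts : (c : S.CName T) → Exp S) :
    lccStep (.caseE T e alts) (.caseE T e₁ alts) := by
  obtain ⟨A, r, r', hb, rfl, rfl⟩ := h
  exact ⟨.caseA T A alts, r, r', hb, rfl, rfl⟩

theorem stepsApp {u u₁ : Exp S} (h : Relation.ReflTransGen lccStep u u₁) (v : Exp S) :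
    Relation.ReflTransGen lccStep (.app u v) (.app u₁ v) :=
  Relation.ReflTransGen.lift (fun x => Exp.app x v) (fun _ _ hs => stepApp hs v) _ _ h

theorem stepsSeq {u u₁ : Exp S} (h : Relation.ReflTransGen lccStep u u₁) (v : Exp S) :
    Relation.ReflTransGen lccStep (.seqE u v) (.seqE u₁ v) :=
  Relation.ReflTransGen.lift (fun x => Exp.seqE x v) (fun _ _ hs => stepSeq hs v) _ _ h

theorem stepsCase {e e₁ : Exp S} (h : Relation.ReflTransGen lccStep e e₁) (T : S.TyName)
    (alts : (c : S.CName T) → Exp S) :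
    Relation.ReflTransGen lccStep (.caseE T e alts) (.caseE T e₁ alts) :=
  Relation.ReflTransGen.lift (fun x => Exp.caseE T x alts) (fun _ _ hs => stepCase hs T alts) _ _ h

theorem baseSubst {r r' : Exp S} (σ : ℕ → Exp S) (h : LccBase r r') :
    LccBase (subst σ r) (subst σ r') := by
  cases h with
  | @nbeta u t =>
      show LccBase (.app (.lam (subst (upN 1 σ) u)) (subst σ t)) _
      rw [subst_consSub]
      exact .nbeta
  | nseq hv => exact .nseq (isValue_subst σ hv)
  | @ncase T c args alts =>
      show LccBase (.caseE T (.constr T c fun i => subst σ (args i)) _) _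
      rw [subst_instSub]
      exact .ncase

theorem stepSubst {u u₁ : Exp S} (h : lccStep u u₁) (σ : ℕ → Exp S) :
    lccStep (subst σ u) (subst σ u₁) := by
  obtain ⟨A, r, r', hb, rfl, rfl⟩ := h
  induction A generalizing σ with
  | hole => exact ⟨.hole, _, _, baseSubst σ hb, rfl, rfl⟩
  | appA A t ih =>
      obtain ⟨A', x, x', hb', hx, hx'⟩ := ih σ
      exact ⟨.appA A' (subst σ t), x, x', hb', by simp [plugA, subst, hx],
        by simp [plugA, subst, hx']⟩
  | seqA A t ih =>
      obtain ⟨A', x, x', hb', hx, hx'⟩ := ih σ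
      exact ⟨.seqA A' (subst σ t), x, x', hb', by simp [plugA, subst, hx],
        by simp [plugA, subst, hx']⟩
  | caseA T A alts ih =>
      obtain ⟨A', x, x', hb', hx, hx'⟩ := ih σ
      exact ⟨.caseA T A' (fun c => subst (upN (S.arity T c) σ) (alts c)), x, x', hb',
        by simp [plugA, subst, hx], by simp [plugA, subst, hx']⟩

theorem stepsSubst {u u₁ : Exp S} (h : Relation.ReflTransGen lccStep u u₁) (σ : ℕ → Exp S) :
    Relation.ReflTransGen lccStep (subst σ u) (subst σ u₁) :=
  Relation.ReflTransGen.lift (subst σ) (fun _ _ hs => stepSubst hs σ) _ _ h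

end Core

namespace Core

variable {S : Sig}

theorem noStepValue {v z : Exp S} (hv : isValue v) (h : lccStep v z) : False := by
  obtain ⟨A, r, r', hb, he, -⟩ := h
  cases A with
  | hole => subst he; cases hb <;> simp [isValue] at hv
  | appA A t => rw [he] at hv; simp [plugA, isValue] at hv
  | seqA A t => rw [he] at hv; simp [plugA, isValue] at hv
  | caseA T A alts => rw [he] at hv; simp [plugA, isValue] at hv

theorem noStepVar {k : ℕ} {z : Exp S} (h : lccStep (.var k) z) : False := by
  obtain ⟨A, r, r', hb, he, -⟩ := h
  cases A with
  | hole => subst he; cases hb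
  | appA A t => simp [plugA] at he
  | seqA A t => simp [plugA] at he
  | caseA T A alts => simp [plugA] at he

theorem noStepLetrec {n : ℕ} {b : Fin (n+1) → Exp S} {t z : Exp S}
    (h : lccStep (.letrecE n b t) z) : False := by
  obtain ⟨A, r, r', hb, he, -⟩ := h
  cases A with
  | hole => subst he; cases hb
  | appA A t => simp [plugA] at he
  | seqA A t => simp [plugA] at he
  | caseA T A alts => simp [plugA] at he

theorem invApp {u v z : Exp S} (h : lccStep (.app u v) z) :
    (∃ b, u = .lam b ∧ z = subst (consSub v) b) ∨
    (∃ u₁, lccStep u u₁ ∧ z = .app u₁ v) := by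
  obtain ⟨A, r, r', hb, he, rfl⟩ := h
  cases A with
  | hole =>
      subst he
      cases hb with
      | @nbeta b t => exact .inl ⟨b, rfl, rfl⟩
  | appA A t =>
      simp only [plugA] at he
      injection he with h1 h2
      subst h1; subst h2
      exact .inr ⟨plugA A r', ⟨A, r, r', hb, rfl, rfl⟩, rfl⟩
  | seqA A t => simp [plugA] at he
  | caseA T A alts => simp [plugA] at he

theorem invSeq {u v z : Exp S} (h : lccStep (.seqE u v) z) :
    (isValue u ∧ z = v) ∨
    (∃ u₁, lccStep u u₁ ∧ z = .seqE u₁ v) := by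
  obtain ⟨A, r, r', hb, he, rfl⟩ := h
  cases A with
  | hole =>
      subst he
      cases hb with
      | nseq hv => exact .inl ⟨hv, rfl⟩
  | appA A t => simp [plugA] at he
  | seqA A t =>
      simp only [plugA] at he
      injection he with h1 h2
      subst h1; subst h2
      exact .inr ⟨plugA A r', ⟨A, r, r', hb, rfl, rfl⟩, rfl⟩
  | caseA T A alts => simp [plugA] at he

theorem invCase {T : S.TyName} {e z : Exp S} {alts : (c : S.CName T) → Exp S}
    (h : lccStep (.caseE T e alts) z) :
    (∃ c args, e = .constr T c args ∧ z = subst (instSub args) (alts c)) ∨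
    (∃ e₁, lccStep e e₁ ∧ z = .caseE T e₁ alts) := by
  obtain ⟨A, r, r', hb, he, rfl⟩ := h
  cases A with
  | hole =>
      subst he
      cases hb with
      | @ncase T c args alts => exact .inl ⟨c, args, rfl, rfl⟩
  | appA A t => simp [plugA] at he
  | seqA A t => simp [plugA] at he
  | caseA T' A alts' =>
      simp only [plugA] at he
      injection he with h1 h2 h3
      subst h1
      subst h2
      have h3' : alts = alts' := eq_of_heq h3
      subst h3'
      exact .inr ⟨plugA A r', ⟨A, r, r', hb, rfl, rfl⟩, rfl⟩

/-! ### Inversions of parallel reduction at values -/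

theorem parLamInv {b t : Exp S} (h : Par (.lam b) t) :
    ∃ b', t = .lam b' ∧ Par b b' := by
  cases h with
  | lam hb => exact ⟨_, rfl, hb⟩

theorem parConstrInv {T : S.TyName} {c : S.CName T} {args : Fin (S.arity T c) → Exp S}
    {t : Exp S} (h : Par (.constr T c args) t) :
    ∃ args', t = .constr T c args' ∧ ∀ i, Par (args i) (args' i) := by
  cases h with
  | constr hargs => exact ⟨_, rfl, hargs⟩

theorem iparLamInv {p b' : Exp S} (h : IPar p (.lam b')) :
    ∃ b, p = .lam b ∧ Par b b' := by
  cases h with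
  | lam hb => exact ⟨_, rfl, hb⟩

theorem iparConstrInv {T : S.TyName} {c : S.CName T} {args' : Fin (S.arity T c) → Exp S}
    {p : Exp S} (h : IPar p (.constr T c args')) :
    ∃ args, p = .constr T c args ∧ ∀ i, Par (args i) (args' i) := by
  cases h with
  | constr hargs => exact ⟨_, rfl, hargs⟩

end Core

namespace Core

variable {S : Sig}

/-- base step at the top -/
theorem stepOfBase {r r' : Exp S} (h : LccBase r r') : lccStep r r' :=
  ⟨.hole, r, r', h, rfl, rfl⟩

/-- Swap lemma: an internal parallel step followed by a normal-order step
can be reorganized into a normal-order step followed by a parallel step. -/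
theorem swap {m t : Exp S} (h : IPar m t) :
    ∀ {t₁}, lccStep t t₁ → ∃ m₁, lccStep m m₁ ∧ Par m₁ t₁ := by
  induction h with
  | var k => intro t₁ hs; exact absurd hs noStepVar
  | lam _ => intro t₁ hs; exact absurd hs (noStepValue (by simp [isValue]))
  | constr _ => intro t₁ hs; exact absurd hs (noStepValue (by simp [isValue]))
  | letrec _ _ => intro t₁ hs; exact absurd hs noStepLetrec
  | @app u u' v v' hu hv ih =>
      intro t₁ hs
      rcases invApp hs with ⟨b', hb', rfl⟩ | ⟨u₁', hu₁', rfl⟩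
      · subst hb'
        obtain ⟨b, rfl, hbb⟩ := iparLamInv hu
        exact ⟨subst (consSub v) b, stepOfBase .nbeta,
          parSubst hbb (parConsSub hv)⟩
      · obtain ⟨m₁, hm₁, hp⟩ := ih hu₁'
        exact ⟨.app m₁ v, stepApp hm₁ v, .app hp hv⟩
  | @seqC u u' v v' hu hv ih =>
      intro t₁ hs
      rcases invSeq hs with ⟨hval, rfl⟩ | ⟨u₁', hu₁', rfl⟩
      · exact ⟨v, stepOfBase (.nseq (iparValue hu hval)), hv⟩
      · obtain ⟨m₁, hm₁, hp⟩ := ih hu₁'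
        exact ⟨.seqE m₁ v, stepSeq hm₁ v, .seqC hp hv⟩
  | @caseC T e e' alts alts' he halts ih =>
      intro t₁ hs
      rcases invCase hs with ⟨c, args', hargs', rfl⟩ | ⟨e₁', he₁', rfl⟩
      · subst hargs'
        obtain ⟨args, rfl, haa⟩ := iparConstrInv he
        exact ⟨subst (instSub args) (alts c), stepOfBase .ncase,
          parSubst (halts c) (parInstSub haa)⟩
      · obtain ⟨m₁, hm₁, hp⟩ := ih he₁'
        exact ⟨.caseE T m₁ alts, stepCase hm₁ T alts, .caseC hp halts⟩

/-- Forward diagram: parallel reduction commutes over a normal-order step. -/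
theorem fwdDiag {s t : Exp S} (h : Par s t) :
    ∀ {s₁}, lccStep s s₁ → ∃ t₁, Relation.ReflTransGen lccStep t t₁ ∧ Par s₁ t₁ := by
  induction h with
  | var k => intro s₁ hs; exact absurd hs noStepVar
  | lam _ => intro s₁ hs; exact absurd hs (noStepValue (by simp [isValue]))
  | constr _ => intro s₁ hs; exact absurd hs (noStepValue (by simp [isValue]))
  | letrec _ _ => intro s₁ hs; exact absurd hs noStepLetrec
  | @app u u' v v' hu hv ihu ihv =>
      intro s₁ hs
      rcases invApp hs with ⟨b, hb, rfl⟩ | ⟨u₁, hu₁, rfl⟩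
      · subst hb
        obtain ⟨b', rfl, hbb⟩ := parLamInv hu
        exact ⟨subst (consSub v') b', .single (stepOfBase .nbeta),
          parSubst hbb (parConsSub hv)⟩
      · obtain ⟨t₁, ht₁, hp⟩ := ihu hu₁
        exact ⟨.app t₁ v', stepsApp ht₁ v', .app hp hv⟩
  | @seqC u u' v v' hu hv ihu ihv =>
      intro s₁ hs
      rcases invSeq hs with ⟨hval, rfl⟩ | ⟨u₁, hu₁, rfl⟩
      · exact ⟨v', .single (stepOfBase (.nseq (parValue hu hval))), hv⟩
      · obtain ⟨t₁, ht₁, hp⟩ := ihu hu₁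
        exact ⟨.seqE t₁ v', stepsSeq ht₁ v', .seqC hp hv⟩
  | @caseC T e e' alts alts' he halts ihe ihalts =>
      intro s₁ hs
      rcases invCase hs with ⟨c, args, hargs, rfl⟩ | ⟨e₁, he₁, rfl⟩
      · subst hargs
        obtain ⟨args', rfl, haa⟩ := parConstrInv he
        exact ⟨subst (instSub args') (alts' c), .single (stepOfBase .ncase),
          parSubst (halts c) (parInstSub haa)⟩
      · obtain ⟨t₁, ht₁, hp⟩ := ihe he₁
        exact ⟨.caseE T t₁ alts', stepsCase ht₁ T alts', .caseC hp halts⟩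
  | @beta u u' a a' hu ha ihu iha =>
      intro s₁ hs
      rcases invApp hs with ⟨b, hb, rfl⟩ | ⟨u₁, hu₁, rfl⟩
      · have hb' : b = u := by injection hb with h; exact h.symm
        subst hb'
        exact ⟨_, .refl, parSubst hu (parConsSub ha)⟩
      · exact absurd hu₁ (noStepValue (by simp [isValue]))
  | @seqR v q q' hval hq ihq =>
      intro s₁ hs
      rcases invSeq hs with ⟨-, rfl⟩ | ⟨u₁, hu₁, rfl⟩
      · exact ⟨q', .refl, hq⟩
      · exact absurd hu₁ (noStepValue hval)
  | @caseR T c args args' alts r' hargs hr ihargs ihr =>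
      intro s₁ hs
      rcases invCase hs with ⟨c0, args0, hargs0, rfl⟩ | ⟨e₁, he₁, rfl⟩
      · have hc : c0 = c := by injection hargs0 with h1 h2 h3; exact h2.symm
        subst hc
        have ha : args0 = args := by
          injection hargs0 with h1 h2 h3; exact h3.symm
        subst ha
        exact ⟨_, .refl, parSubst hr (parInstSub hargs)⟩
      · exact absurd he₁ (noStepValue (by simp [isValue]))

end Core

namespace Core

variable {S : Sig}

/-- Substitution lemma for factorized parallel reduction. -/
theorem subFact {σ σ' : ℕ → Exp S}
    (H1 : ∀ k, Par (σ k) (σ' k))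
    (H2 : ∀ k, ∃ a, Relation.ReflTransGen lccStep (σ k) a ∧ IPar a (σ' k)) :
    ∀ {u u'}, IPar u u' →
      ∃ m, Relation.ReflTransGen lccStep (subst σ u) m ∧ IPar m (subst σ' u') := by
  intro u u' h
  induction h with
  | var k => exact H2 k
  | @app p p' q q' hp hq ih =>
      obtain ⟨P, hP, hiP⟩ := ih
      exact ⟨.app P (subst σ q), stepsApp hP _, .app hiP (parSubst hq H1)⟩
  | lam hb =>
      exact ⟨_, .refl, .lam (parSubst hb (parUpN H1 1))⟩
  | constr hargs =>
      exact ⟨_, .refl, .constr (fun i => parSubst (hargs i) H1)⟩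
  | @seqC p p' q q' hp hq ih =>
      obtain ⟨P, hP, hiP⟩ := ih
      exact ⟨.seqE P (subst σ q), stepsSeq hP _, .seqC hiP (parSubst hq H1)⟩
  | @caseC T p p' alts alts' hp halts ih =>
      obtain ⟨P, hP, hiP⟩ := ih
      exact ⟨.caseE T P _, stepsCase hP T _,
        .caseC hiP (fun c => parSubst (halts c) (parUpN H1 _))⟩
  | letrec hb ht =>
      exact ⟨_, .refl, .letrec (fun i => parSubst (hb i) (parUpN H1 _))
        (parSubst ht (parUpN H1 _))⟩

/-- Factorization: a parallel step is a sequence of normal-order steps followed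
by an internal parallel step. -/
theorem parFact {s t : Exp S} (h : Par s t) :
    ∃ m, Relation.ReflTransGen lccStep s m ∧ IPar m t := by
  induction h with
  | var k => exact ⟨_, .refl, .var k⟩
  | @app u u' v v' hu hv ihu ihv =>
      obtain ⟨m, hm, him⟩ := ihu
      exact ⟨.app m v, stepsApp hm v, .app him hv⟩
  | lam hb => exact ⟨_, .refl, .lam hb⟩
  | constr hargs => exact ⟨_, .refl, .constr hargs⟩
  | @seqC u u' v v' hu hv ihu ihv =>
      obtain ⟨m, hm, him⟩ := ihu
      exact ⟨.seqE m v, stepsSeq hm v, .seqC him hv⟩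
  | @caseC T e e' alts alts' he halts ihe ihalts =>
      obtain ⟨m, hm, him⟩ := ihe
      exact ⟨.caseE T m alts, stepsCase hm T alts, .caseC him halts⟩
  | letrec hb ht => exact ⟨_, .refl, .letrec hb ht⟩
  | @beta u u' a a' hu ha ihu iha =>
      obtain ⟨u₀, hu₀, hiu₀⟩ := ihu
      have H1 : ∀ k, Par (consSub a k) (consSub a' k) := parConsSub ha
      have H2 : ∀ k, ∃ x, Relation.ReflTransGen lccStep (consSub a k) x ∧
          IPar x (consSub a' k) := by
        intro k
        cases k with
        | zero => exact iha
        | succ k => exact ⟨_, .refl, .var _⟩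
      obtain ⟨m, hm, him⟩ := subFact H1 H2 hiu₀
      refine ⟨m, .head (stepOfBase .nbeta) ?_, him⟩
      exact .trans (stepsSubst hu₀ _) hm
  | @seqR v q q' hval hq ihq =>
      obtain ⟨m, hm, him⟩ := ihq
      exact ⟨m, .head (stepOfBase (.nseq hval)) hm, him⟩
  | @caseR T c args args' alts r' hargs hr ihargs ihr =>
      obtain ⟨m₀, hm₀, him₀⟩ := ihr
      have H1 : ∀ k, Par (instSub args k) (instSub args' k) := parInstSub hargs
      have H2 : ∀ k, ∃ a, Relation.ReflTransGen lccStep (instSub args k) a ∧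
          IPar a (instSub args' k) := by
        intro k
        by_cases hk : k < S.arity T c
        · simp only [instSub, hk, dif_pos]; exact ihargs ⟨k, hk⟩
        · simp only [instSub, hk, dif_neg]; exact ⟨_, .refl, .var _⟩
      obtain ⟨m, hm, him⟩ := subFact H1 H2 him₀
      refine ⟨m, .head (stepOfBase .ncase) ?_, him⟩
      exact .trans (stepsSubst hm₀ _) hm

end Core

namespace Core

variable {S : Sig}

theorem fwdConvAux {s v : Exp S} (hs : Relation.ReflTransGen lccStep s v) (hv : isValue v) :
    ∀ t, Par s t → lccConv t := by
  induction hs using Relation.ReflTransGen.head_induction_on with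
  | refl => exact fun t ht => ⟨t, .refl, parValue ht hv⟩
  | head hstep hrest ih =>
      intro t ht
      obtain ⟨t₁, ht₁, hp⟩ := fwdDiag ht hstep
      obtain ⟨w, hw, hwv⟩ := ih _ hp
      exact ⟨w, ht₁.trans hw, hwv⟩

theorem backConvAux {t v : Exp S} (hs : Relation.ReflTransGen lccStep t v) (hv : isValue v) :
    ∀ m, IPar m t → lccConv m := by
  induction hs using Relation.ReflTransGen.head_induction_on with
  | refl => exact fun m hm => ⟨m, .refl, iparValue hm hv⟩
  | head hstep hrest ih =>
      intro m hm
      obtain ⟨m₁, hm₁, hp⟩ := swap hm hstep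
      obtain ⟨m₂, hm₂, him₂⟩ := parFact hp
      obtain ⟨w, hw, hwv⟩ := ih _ him₂
      exact ⟨w, .head hm₁ (hm₂.trans hw), hwv⟩

theorem parConvIff {a b : Exp S} (h : Par a b) : lccConv a ↔ lccConv b := by
  constructor
  · rintro ⟨v, hs, hv⟩
    exact fwdConvAux hs hv b h
  · rintro ⟨v, hs, hv⟩
    obtain ⟨m, hm, him⟩ := parFact h
    obtain ⟨w, hw, hwv⟩ := backConvAux hs hv m him
    exact ⟨w, hm.trans hw, hwv⟩

theorem parPlugA {r r' : Exp S} (h : Par r r') (A : ACtx S) :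
    Par (plugA A r) (plugA A r') := by
  induction A with
  | hole => exact h
  | appA A t ih => exact .app ih (parRefl t)
  | seqA A t ih => exact .seqC ih (parRefl t)
  | caseA T A alts ih => exact .caseC ih (fun c => parRefl _)

theorem parPlugC {r r' : Exp S} (h : Par r r') (C : Ctx S) :
    Par (plugC C r) (plugC C r') := by
  induction C with
  | hole => exact h
  | appL C t ih => exact .app ih (parRefl t)
  | appR t C ih => exact .app (parRefl t) ih
  | lamC C ih => exact .lam ih
  | seqL C t ih => exact .seqC ih (parRefl t)
  | seqR t C ih => exact .seqC (parRefl t) ih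
  | constrC T c i args C ih =>
      refine .constr fun j => ?_
      rcases eq_or_ne j i with rfl | hj
      · simpa [Function.update] using ih
      · simp only [Function.update, dif_neg hj]
        exact parRefl _
  | caseScrut T C alts ih => exact .caseC ih (fun c => parRefl _)
  | caseAlt T c0 scrut alts C ih =>
      refine .caseC (parRefl scrut) fun c => ?_
      unfold updAlt
      by_cases hc : c = c0
      · simp only [if_pos hc]; exact ih
      · simp only [if_neg hc]; exact parRefl _
  | letrecB n i b C t ih =>
      refine .letrec (fun j => ?_) (parRefl t)
      rcases eq_or_ne j i with rfl | hj
      · simpa [Function.update] using ih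
      · simp only [Function.update, dif_neg hj]
        exact parRefl _
  | letrecT n b C ih => exact .letrec (fun i => parRefl _) ih

theorem parOfBase {r r' : Exp S} (h : LccBase r r') : Par r r' := by
  cases h with
  | nbeta => exact .beta (parRefl _) (parRefl _)
  | nseq hv => exact .seqR hv (parRefl _)
  | ncase => exact .caseR (fun i => parRefl _) (parRefl _)

theorem eqLccOfPar {a b : Exp S} (h : Par a b) : eqLcc a b := by
  constructor
  · intro C _ hc
    exact (parConvIff (parPlugC h C)).mp hc
  · intro C _ hc
    exact (parConvIff (parPlugC h C)).mpr hc

end Core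

namespace Core

/-- In `L_lcc`, normal-order reduction preserves contextual equivalence;
hence the reduction rules (nbeta), (ncase), (nseq) are correct program transformations,
i.e. applying them in any context preserves `∼_lcc`. -/
theorem lcc_reduction_correct (S : Sig) :
    (∀ s s' : Exp S, lfree s → lccStep s s' → eqLcc s s') ∧
    (∀ r r' : Exp S, lfree r → LccBase r r' →
      ∀ C : Ctx S, lfreeCtx C → eqLcc (plugC C r) (plugC C r')) := by
  constructor
  · intro s s' _ hstep
    obtain ⟨A, r, r', hb, rfl, rfl⟩ := hstep
    exact eqLccOfPar (parPlugA (parOfBase hb) A)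
  · intro r r' _ hb C _
    exact eqLccOfPar (parPlugC (parOfBase hb) C)

end Core
end

section
/- The closed part of the calculus L_lcc is convergence-admissible with respect to the set Q_lcc: for every Q ∈ Q_lcc, every closed L_lcc-expression s, and every value v, Q[s] ↓_lcc v if and only if there exists a value v' with s ↓_lcc v' and Q[v'] ↓_lcc v. -/
variable (S : Sig)

namespace Core

variable {S : Sig}

/-! ### Auxiliary lemmas for convergence admissibility -/

/-- composition of `A`-contexts -/
def compA : ACtx S → ACtx S → ACtx S
  | .hole, B => B
  | .appA A t, B => .appA (compA A B) t
  | .seqA A t, B => .seqA (compA A B) t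
  | .caseA T A alts, B => .caseA T (compA A B) alts

lemma plugA_compA : ∀ (A B : ACtx S) (e : Exp S), plugA (compA A B) e = plugA A (plugA B e) := by
  intro A
  induction A with
  | hole => intro B e; rfl
  | appA A t ih => intro B e; simp [compA, plugA, ih]
  | seqA A t ih => intro B e; simp [compA, plugA, ih]
  | caseA T A alts ih => intro B e; simp [compA, plugA, ih]

lemma lccStep_plugA (A : ACtx S) {s t : Exp S} (h : lccStep s t) :
    lccStep (plugA A s) (plugA A t) := by
  obtain ⟨B, r, r', hb, rfl, rfl⟩ := h
  exact ⟨compA A B, r, r', hb, (plugA_compA A B r).symm, (plugA_compA A B r').symm⟩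

lemma isValue_plugA : ∀ {A : ACtx S} {s : Exp S}, isValue (plugA A s) → isValue s := by
  intro A s h
  cases A with
  | hole => exact h
  | appA A t => simp [plugA, isValue] at h
  | seqA A t => simp [plugA, isValue] at h
  | caseA T A alts => simp [plugA, isValue] at h

lemma base_app_inv {u v r' : Exp S} (h : LccBase (.app u v) r') :
    ∃ b, u = .lam b ∧ r' = subst (consSub v) b := by
  cases h; exact ⟨_, rfl, rfl⟩

lemma base_seq_inv {u v r' : Exp S} (h : LccBase (.seqE u v) r') : isValue u ∧ r' = v := by
  cases h with | nseq hv => exact ⟨hv, rfl⟩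

lemma base_case_inv {T : S.TyName} {u : Exp S} {alts : (c : S.CName T) → Exp S} {r' : Exp S}
    (h : LccBase (.caseE T u alts) r') :
    ∃ c args, u = .constr T c args ∧ r' = subst (instSub args) (alts c) := by
  cases h; exact ⟨_, _, rfl, rfl⟩

lemma step_plug_decomp : ∀ (A : ACtx S) {s t : Exp S}, ¬ isValue s →
    lccStep (plugA A s) t → ∃ s', lccStep s s' ∧ t = plugA A s' := by
  intro A
  induction A with
  | hole =>
    intro s t _ h; exact ⟨t, h, rfl⟩
  | appA A u ih =>
    intro s t hv h
    obtain ⟨B, r, r', hb, he, rfl⟩ := h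
    cases B with
    | hole =>
      simp only [plugA] at he
      subst he
      obtain ⟨b, hlam, _⟩ := base_app_inv hb
      exact absurd (isValue_plugA (by rw [hlam]; trivial)) hv
    | appA B' w =>
      simp only [plugA] at he
      injection he with h1 h2
      subst h2
      obtain ⟨s', hs', hps'⟩ := ih hv ⟨B', r, r', hb, h1, rfl⟩
      exact ⟨s', hs', by simp [plugA, hps']⟩
    | seqA B' w => simp [plugA] at he
    | caseA T B' alts => simp [plugA] at he
  | seqA A u ih =>
    intro s t hv h
    obtain ⟨B, r, r', hb, he, rfl⟩ := h
    cases B with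
    | hole =>
      simp only [plugA] at he
      subst he
      exact absurd (isValue_plugA (base_seq_inv hb).1) hv
    | seqA B' w =>
      simp only [plugA] at he
      injection he with h1 h2
      subst h2
      obtain ⟨s', hs', hps'⟩ := ih hv ⟨B', r, r', hb, h1, rfl⟩
      exact ⟨s', hs', by simp [plugA, hps']⟩
    | appA B' w => simp [plugA] at he
    | caseA T B' alts => simp [plugA] at he
  | caseA T A alts ih =>
    intro s t hv h
    obtain ⟨B, r, r', hb, he, rfl⟩ := h
    cases B with
    | hole =>
      simp only [plugA] at he
      subst he
      obtain ⟨c, args, hc, _⟩ := base_case_inv hb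
      exact absurd (isValue_plugA (by rw [hc]; trivial)) hv
    | caseA T' B' alts' =>
      simp only [plugA] at he
      injection he with hT h1 h2
      subst hT
      obtain rfl := eq_of_heq h2
      obtain ⟨s', hs', hps'⟩ := ih hv ⟨B', r, r', hb, h1, rfl⟩
      exact ⟨s', hs', by simp [plugA, hps']⟩
    | appA B' w => simp [plugA] at he
    | seqA B' w => simp [plugA] at he

lemma fwd {x v : Exp S} (h : Relation.ReflTransGen lccStep x v) (hv : isValue v) :
    ∀ (A : ACtx S) (s : Exp S), x = plugA A s →
      ∃ v', lccConvTo s v' ∧ lccConvTo (plugA A v') v := by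
  induction h using Relation.ReflTransGen.head_induction_on with
  | refl =>
    intro A s hs
    by_cases hvs : isValue s
    · exact ⟨s, ⟨.refl, hvs⟩, ⟨hs ▸ .refl, hv⟩⟩
    · exact absurd (isValue_plugA (hs ▸ hv)) hvs
  | head hstep hrest ih =>
    intro A s hs
    subst hs
    by_cases hvs : isValue s
    · exact ⟨s, ⟨.refl, hvs⟩, ⟨.head hstep hrest, hv⟩⟩
    · obtain ⟨s', hss', rfl⟩ := step_plug_decomp A hvs hstep
      obtain ⟨v', ⟨hsv', hvv'⟩, hconv⟩ := ih A s' rfl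
      exact ⟨v', ⟨.head hss' hsv', hvv'⟩, hconv⟩

theorem admissible_A (A : ACtx S) (s v : Exp S) :
    lccConvTo (plugA A s) v ↔ ∃ v', lccConvTo s v' ∧ lccConvTo (plugA A v') v := by
  constructor
  · rintro ⟨hsteps, hv⟩
    exact fwd hsteps hv A s rfl
  · rintro ⟨v', ⟨h1, _⟩, h2, hv⟩
    refine ⟨.trans ?_ h2, hv⟩
    exact Relation.ReflTransGen.lift (plugA A) (fun a b hab => lccStep_plugA A hab) _ _ h1

/-- The closed part of `L_lcc` is convergence-admissible w.r.t.
the set `Q_lcc`. -/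
theorem lcc_convergence_admissible (S : Sig) :
    ∀ f ∈ Qlcc S, ∀ s : Exp S, lfree s → closed s →
      ∀ v, lccConvTo (f s) v ↔ ∃ v', lccConvTo s v' ∧ lccConvTo (f v') v := by
  intro f hf s _ _ v
  rcases hf with ⟨r, _, _, rfl⟩ | ⟨T, c, i, rfl⟩ | ⟨T, c, rfl⟩
  · exact admissible_A (.appA .hole r) s v
  · exact admissible_A
      (.caseA T .hole (fun c' => letI := S.deceq T; if c' = c then .var i else Omega)) s v
  · exact admissible_A
      (.caseA T .hole (fun c' => letI := S.deceq T; if c' = c then trueE else Omega)) s v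

end Core
end
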